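/- Let φ be a norm on ℝ^n, differentiable away from 0 with differentiable polar φ°. Then for every ξ ≠ 0, one has (φ° ∇φ°)(φ(ξ) ∇φ(ξ)) = ξ; in particular ∇φ°(∇φ(ξ)) = ξ / φ(ξ). -/

import Mathlib

open scoped RealInnerProductSpace

theorem stmt5 (n : ℕ) (φ : EuclideanSpace ℝ (Fin n) → ℝ)
    (hφ0 : ∀ x, 0 ≤ φ x) (hφeq : ∀ x, φ x = 0 ↔ x = 0)
    (hhom : ∀ (c : ℝ) (x), φ (c • x) = |c| * φ x)
    (htri : ∀ x y, φ (x + y) ≤ φ x + φ y)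
    (hstrict : ∀ x y, φ x ≤ 1 → φ y ≤ 1 → x ≠ y → φ ((1 / 2 : ℝ) • (x + y)) < 1)
    (hdiff : ∀ x : EuclideanSpace ℝ (Fin n), x ≠ 0 → DifferentiableAt ℝ φ x)
    (φpol : EuclideanSpace ℝ (Fin n) → ℝ)
    (hpol : ∀ ξ, φpol ξ = sSup {t : ℝ | ∃ x, φ x ≤ 1 ∧ t = ⟪x, ξ⟫})
    (hpoldiff : ∀ x : EuclideanSpace ℝ (Fin n), x ≠ 0 → DifferentiableAt ℝ φpol x)
    (ξ : EuclideanSpace ℝ (Fin n)) (hξ : ξ ≠ 0) :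
    φpol (φ ξ • gradient φ ξ) • gradient φpol (φ ξ • gradient φ ξ) = ξ ∧
    gradient φpol (gradient φ ξ) = (φ ξ)⁻¹ • ξ := by
  classical
  have hφ00 : φ 0 = 0 := (hφeq 0).mpr rfl
  have hφξ : 0 < φ ξ := (hφ0 ξ).lt_of_ne fun h => hξ ((hφeq ξ).mp h.symm)
  -- Step A : upper bound φ x ≤ C ‖x‖
  set C : ℝ := ∑ i, φ (EuclideanSpace.single i (1:ℝ)) with hCdef
  have hC0 : 0 ≤ C := Finset.sum_nonneg fun i _ => hφ0 _
  have habs : ∀ (x : EuclideanSpace ℝ (Fin n)) (i : Fin n), |x i| ≤ ‖x‖ := by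
    intro x i
    have h1 : ⟪EuclideanSpace.single i (1:ℝ), x⟫ = x i := by
      simp [EuclideanSpace.inner_single_left]
    have h2 := abs_real_inner_le_norm (EuclideanSpace.single i (1:ℝ)) x
    rw [h1] at h2
    simpa [EuclideanSpace.norm_single] using h2
  have hsum : ∀ (s : Finset (Fin n)) (f : Fin n → EuclideanSpace ℝ (Fin n)),
      φ (∑ i ∈ s, f i) ≤ ∑ i ∈ s, φ (f i) := by
    intro s f
    induction s using Finset.cons_induction with
    | empty => simp [hφ00]
    | cons a s ha ih =>
        rw [Finset.sum_cons, Finset.sum_cons]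
        exact (htri _ _).trans (by linarith)
  have hCb : ∀ x : EuclideanSpace ℝ (Fin n), φ x ≤ C * ‖x‖ := by
    intro x
    have hx : x = ∑ i, x i • EuclideanSpace.single i (1:ℝ) := by
      have := (EuclideanSpace.basisFun (Fin n) ℝ).sum_repr x
      simp only [EuclideanSpace.basisFun_repr, EuclideanSpace.basisFun_apply] at this
      exact this.symm
    calc φ x = φ (∑ i, x i • EuclideanSpace.single i (1:ℝ)) := by rw [← hx]
      _ ≤ ∑ i, φ (x i • EuclideanSpace.single i (1:ℝ)) := hsum _ _
      _ = ∑ i, |x i| * φ (EuclideanSpace.single i (1:ℝ)) := by simp [hhom]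
      _ ≤ ∑ i, ‖x‖ * φ (EuclideanSpace.single i (1:ℝ)) :=
          Finset.sum_le_sum fun i _ => mul_le_mul_of_nonneg_right (habs x i) (hφ0 _)
      _ = C * ‖x‖ := by rw [← Finset.mul_sum, mul_comm]
  -- continuity
  have hcont : Continuous φ := by
    have hlip : LipschitzWith (Real.toNNReal C) φ := by
      apply LipschitzWith.of_dist_le_mul
      intro x y
      rw [Real.dist_eq, dist_eq_norm, Real.coe_toNNReal C hC0]
      rw [abs_sub_le_iff]
      constructor
      · have := htri (x - y) y
        simp only [sub_add_cancel] at this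
        linarith [hCb (x - y)]
      · have := htri (y - x) x
        simp only [sub_add_cancel] at this
        have hyx : φ (y - x) = φ (x - y) := by
          have : y - x = (-1 : ℝ) • (x - y) := by module
          rw [this, hhom]; norm_num
        rw [hyx] at this
        linarith [hCb (x - y)]
    exact hlip.continuous
  -- Step B : lower bound m ‖x‖ ≤ φ x
  have hsphne : (Metric.sphere (0 : EuclideanSpace ℝ (Fin n)) 1).Nonempty := by
    refine ⟨‖ξ‖⁻¹ • ξ, ?_⟩
    rw [mem_sphere_zero_iff_norm, norm_smul, norm_inv, norm_norm,
      inv_mul_cancel₀ (norm_ne_zero_iff.mpr hξ)]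
  obtain ⟨x₀, hx₀s, hx₀min⟩ :=
    (isCompact_sphere (0 : EuclideanSpace ℝ (Fin n)) 1).exists_isMinOn hsphne hcont.continuousOn
  have hx₀n : ‖x₀‖ = 1 := mem_sphere_zero_iff_norm.mp hx₀s
  set m : ℝ := φ x₀ with hmdef
  have hm0 : 0 < m := by
    have hx₀0 : x₀ ≠ 0 := by
      intro h; rw [h, norm_zero] at hx₀n; norm_num at hx₀n
    exact (hφ0 x₀).lt_of_ne fun h => hx₀0 ((hφeq x₀).mp h.symm)
  have hmb : ∀ x : EuclideanSpace ℝ (Fin n), m * ‖x‖ ≤ φ x := by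
    intro x
    rcases eq_or_ne x 0 with rfl | hx
    · simp [hφ00]
    · have hnx : (0:ℝ) < ‖x‖ := norm_pos_iff.mpr hx
      have hmem : ‖x‖⁻¹ • x ∈ Metric.sphere (0 : EuclideanSpace ℝ (Fin n)) 1 := by
        rw [mem_sphere_zero_iff_norm, norm_smul, norm_inv, norm_norm, inv_mul_cancel₀ hnx.ne']
      have h2 : m ≤ φ (‖x‖⁻¹ • x) := hx₀min hmem
      rw [hhom, abs_of_pos (inv_pos.mpr hnx)] at h2
      calc m * ‖x‖ ≤ (‖x‖⁻¹ * φ x) * ‖x‖ := by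
            exact mul_le_mul_of_nonneg_right h2 hnx.le
        _ = φ x := by field_simp
  -- Step C : sSup facts for φpol
  have hmem0 : ∀ η : EuclideanSpace ℝ (Fin n),
      (0:ℝ) ∈ {t : ℝ | ∃ x, φ x ≤ 1 ∧ t = ⟪x, η⟫} :=
    fun η => ⟨0, by simp [hφ00], by simp⟩
  have hbdd : ∀ η : EuclideanSpace ℝ (Fin n),
      BddAbove {t : ℝ | ∃ x, φ x ≤ 1 ∧ t = ⟪x, η⟫} := by
    intro η
    refine ⟨m⁻¹ * ‖η‖, ?_⟩
    rintro t ⟨x, hx1, rfl⟩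
    have hxn : ‖x‖ ≤ m⁻¹ := by
      have h := (hmb x).trans hx1
      rw [← one_div, le_div_iff₀ hm0, mul_comm]
      linarith
    calc ⟪x, η⟫ ≤ ‖x‖ * ‖η‖ := real_inner_le_norm x η
      _ ≤ m⁻¹ * ‖η‖ := mul_le_mul_of_nonneg_right hxn (norm_nonneg η)
  have hle : ∀ (η x : EuclideanSpace ℝ (Fin n)), φ x ≤ 1 → ⟪x, η⟫ ≤ φpol η := by
    intro η x hx
    rw [hpol]
    exact le_csSup (hbdd η) ⟨x, hx, rfl⟩
  have hub : ∀ (η : EuclideanSpace ℝ (Fin n)) (b : ℝ),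
      (∀ x, φ x ≤ 1 → ⟪x, η⟫ ≤ b) → φpol η ≤ b := by
    intro η b hb
    rw [hpol]
    exact csSup_le ⟨0, hmem0 η⟩ (by rintro t ⟨x, hx1, rfl⟩; exact hb x hx1)
  -- Step D : directional derivatives and subgradient inequality
  set g : EuclideanSpace ℝ (Fin n) := gradient φ ξ with hgdef
  have hgrad : HasGradientAt φ g ξ := (hdiff ξ hξ).hasGradientAt
  have hdir : ∀ x : EuclideanSpace ℝ (Fin n),
      HasDerivAt (fun t : ℝ => φ (ξ + t • x)) ⟪g, x⟫ 0 := by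
    intro x
    have hline : HasDerivAt (fun t : ℝ => ξ + t • x) x 0 := by
      simpa using ((hasDerivAt_id (0:ℝ)).smul_const x).const_add ξ
    have hfd : HasFDerivAt φ (InnerProductSpace.toDual ℝ _ g) ξ := hgrad.hasFDerivAt
    have hfd' : HasFDerivAt φ (InnerProductSpace.toDual ℝ _ g) ((fun t : ℝ => ξ + t • x) 0) := by
      simpa using hfd
    have := hfd'.comp_hasDerivAt 0 hline
    exact (by simpa [InnerProductSpace.toDual_apply_apply] using this : HasDerivAt (φ ∘ fun t : ℝ => ξ + t • x) ⟪g, x⟫ 0)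
  have hsub : ∀ x : EuclideanSpace ℝ (Fin n), ⟪g, x⟫ ≤ φ x := by
    intro x
    have h1 : Filter.Tendsto (slope (fun t : ℝ => φ (ξ + t • x)) 0) (nhdsWithin 0 (Set.Ioi 0))
        (nhds ⟪g, x⟫) :=
      (hasDerivAt_iff_tendsto_slope.mp (hdir x)).mono_left
        (nhdsWithin_mono 0 fun t ht => ne_of_gt ht)
    refine le_of_tendsto h1 ?_
    filter_upwards [self_mem_nhdsWithin] with t ht
    have ht' : (0:ℝ) < t := ht
    have hineq : φ (ξ + t • x) ≤ φ ξ + t * φ x := by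
      calc φ (ξ + t • x) ≤ φ ξ + φ (t • x) := htri _ _
        _ = φ ξ + t * φ x := by rw [hhom, abs_of_pos ht']
    rw [slope_def_field]
    simp only [zero_smul, add_zero, sub_zero]
    rw [div_le_iff₀ ht']
    nlinarith
  -- Step E : Euler identity
  have heuler : ⟪g, ξ⟫ = φ ξ := by
    have h1 := hdir ξ
    have h2 : HasDerivAt (fun t : ℝ => (1 + t) * φ ξ) (φ ξ) 0 := by
      simpa using ((hasDerivAt_id (0:ℝ)).const_add 1).mul_const (φ ξ)
    have heq : (fun t : ℝ => φ (ξ + t • ξ)) =ᶠ[nhds (0:ℝ)] fun t : ℝ => (1 + t) * φ ξ := by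
      filter_upwards [Ioo_mem_nhds (by norm_num : (-1:ℝ) < 0) (by norm_num : (0:ℝ) < 1)]
        with t htt
      have h1t : 0 < 1 + t := by linarith [htt.1]
      have hxt : ξ + t • ξ = (1 + t) • ξ := by module
      rw [hxt, hhom, abs_of_pos h1t]
    exact h1.unique (h2.congr_of_eventuallyEq heq)
  -- main duality facts
  have hg0 : g ≠ 0 := by
    intro h
    rw [h, inner_zero_left] at heuler
    exact hφξ.ne heuler
  set u : EuclideanSpace ℝ (Fin n) := (φ ξ)⁻¹ • ξ with hudef
  have hu1 : φ u = 1 := by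
    rw [hudef, hhom, abs_of_pos (inv_pos.mpr hφξ), inv_mul_cancel₀ hφξ.ne']
  have hug : ⟪u, g⟫ = 1 := by
    rw [hudef, real_inner_smul_left, real_inner_comm, heuler, inv_mul_cancel₀ hφξ.ne']
  have hpolg : φpol g = 1 := by
    refine le_antisymm (hub g 1 fun x hx => ?_) ?_
    · exact (le_of_eq (real_inner_comm g x)).trans ((hsub x).trans hx)
    · have := hle g u hu1.le
      rwa [hug] at this
  -- positive homogeneity of φpol
  have hpos : ∀ c : ℝ, 0 < c → ∀ η, φpol (c • η) = c * φpol η := by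
    intro c hc η
    apply le_antisymm
    · apply hub
      intro x hx
      rw [real_inner_smul_right]
      exact mul_le_mul_of_nonneg_left (hle η x hx) hc.le
    · have h2 : φpol η ≤ c⁻¹ * φpol (c • η) := by
        apply hub
        intro x hx
        have h3 := hle (c • η) x hx
        calc ⟪x, η⟫ = c⁻¹ * ⟪x, c • η⟫ := by
              rw [real_inner_smul_right]; field_simp
          _ ≤ c⁻¹ * φpol (c • η) := mul_le_mul_of_nonneg_left h3 (inv_pos.mpr hc).le
      calc c * φpol η ≤ c * (c⁻¹ * φpol (c • η)) := mul_le_mul_of_nonneg_left h2 hc.le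
        _ = φpol (c • η) := by field_simp
  -- gradient of φpol via global minimum
  have key_grad : ∀ η : EuclideanSpace ℝ (Fin n), η ≠ 0 → φpol η = ⟪u, η⟫ →
      gradient φpol η = u := by
    intro η hη hval
    have hdη := hpoldiff η hη
    have hdinner : DifferentiableAt ℝ (fun y : EuclideanSpace ℝ (Fin n) => ⟪u, y⟫) η :=
      (innerSL ℝ u).differentiableAt
    have hmin : IsLocalMin (fun y : EuclideanSpace ℝ (Fin n) => φpol y - ⟪u, y⟫) η := by
      apply Filter.Eventually.of_forall
      intro y
      have h1 := hle y u hu1.le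
      simp only [hval, sub_self]
      linarith
    have h0 := hmin.fderiv_eq_zero
    have hsplit : fderiv ℝ (fun y : EuclideanSpace ℝ (Fin n) => φpol y - ⟪u, y⟫) η
        = fderiv ℝ φpol η - innerSL ℝ u := by
      rw [fderiv_fun_sub hdη hdinner]
      congr 1
      exact (innerSL ℝ u).fderiv
    have hfd : fderiv ℝ φpol η = innerSL ℝ u := by
      rw [hsplit] at h0
      rwa [sub_eq_zero] at h0
    have hga : HasGradientAt φpol u η := by
      rw [hasGradientAt_iff_hasFDerivAt]
      have htd : InnerProductSpace.toDual ℝ (EuclideanSpace ℝ (Fin n)) u = innerSL ℝ u := by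
        ext y
        simp [InnerProductSpace.toDual_apply_apply]
      rw [htd, ← hfd]
      exact hdη.hasFDerivAt
    exact hga.gradient
  -- assembly
  set w : EuclideanSpace ℝ (Fin n) := φ ξ • g with hwdef
  have hpolw : φpol w = φ ξ := by rw [hwdef, hpos _ hφξ, hpolg, mul_one]
  have hw0 : w ≠ 0 := smul_ne_zero hφξ.ne' hg0
  have huw : ⟪u, w⟫ = φ ξ := by rw [hwdef, real_inner_smul_right, hug, mul_one]
  have hgw : gradient φpol w = u := key_grad w hw0 (by rw [hpolw, huw])
  have hgg : gradient φpol g = u := key_grad g hg0 (by rw [hpolg, hug])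
  constructor
  · rw [← hwdef] at *
    rw [hpolw, hgw, hudef, smul_smul, mul_inv_cancel₀ hφξ.ne', one_smul]
  · rw [hgg, hudef]
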